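/- arXiv:2208.07559 — 2 statements merged into one kernel-verified Lean document; each statement's English description precedes it below -/
import Mathlib

section
/- For the graph SEIR system with nonnegative initial data summing componentwise to 1, each component r_j(t) is monotone nondecreasing in t, each s_j(t) is monotone nonincreasing in t, and moreover i_j(t)+r_j(t) is monotone nondecreasing while s_j(t)+e_j(t) is monotone nonincreasing; consequently every trajectory converges as t → ∞ to an equilibrium point of the form (s_∞, 0, 0, r_∞) with Σ_j s_{∞,j} + Σ_j r_{∞,j} = n. -/
open Set Filter

private lemma myMono (f f' : ℝ → ℝ) (hd : ∀ t ≥ (0:ℝ), HasDerivAt f (f' t) t)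
    (h0 : ∀ t ≥ (0:ℝ), 0 ≤ f' t) : MonotoneOn f (Set.Ici 0) := by
  apply monotoneOn_of_deriv_nonneg (convex_Ici 0)
  · exact fun t ht => (hd t ht).continuousAt.continuousWithinAt
  · intro t ht
    rw [interior_Ici] at ht
    exact (hd t ht.le).differentiableAt.differentiableWithinAt
  · intro t ht
    rw [interior_Ici] at ht
    rw [(hd t ht.le).deriv]
    exact h0 t ht.le

private lemma myAnti (f f' : ℝ → ℝ) (hd : ∀ t ≥ (0:ℝ), HasDerivAt f (f' t) t)
    (h0 : ∀ t ≥ (0:ℝ), f' t ≤ 0) : AntitoneOn f (Set.Ici 0) := by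
  have : MonotoneOn (fun t => -f t) (Set.Ici 0) :=
    myMono _ (fun t => -f' t) (fun t ht => (hd t ht).neg) (fun t ht => neg_nonneg.2 (h0 t ht))
  intro x hx y hy hxy
  have := this hx hy hxy
  simpa using this

private lemma myTendsto (f : ℝ → ℝ) (hm : MonotoneOn f (Set.Ici 0))
    (hb : ∀ t ≥ (0:ℝ), f t ≤ 2) : ∃ L, Tendsto f atTop (nhds L) := by
  set g : ℝ → ℝ := fun t => f (max t 0) with hg
  have hgm : Monotone g := fun a b hab =>
    hm (le_max_right a 0) (le_max_right b 0) (max_le_max hab le_rfl)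
  have hbdd : BddAbove (Set.range g) := by
    refine ⟨2, ?_⟩
    rintro x ⟨t, rfl⟩
    exact hb _ (le_max_right t 0)
  refine ⟨⨆ t, g t, (tendsto_atTop_ciSup hgm hbdd).congr' ?_⟩
  filter_upwards [eventually_ge_atTop (0:ℝ)] with t ht
  simp [hg, max_eq_left ht]

private lemma myBarbalat (f f' : ℝ → ℝ) (hd : ∀ t ≥ (0:ℝ), HasDerivAt f (f' t) t)
    {L c : ℝ} (hf : Tendsto f atTop (nhds L)) (hf' : Tendsto f' atTop (nhds c)) : c = 0 := by
  have key : ∀ m : ℕ, ∃ x ∈ Set.Ioo (m:ℝ) (m+1), f' x = (f (m+1) - f m) / ((m+1) - m) := by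
    intro m
    refine exists_hasDerivAt_eq_slope f f' (by linarith) ?_ ?_
    · intro x hx
      exact (hd x (le_trans (Nat.cast_nonneg m) hx.1)).continuousAt.continuousWithinAt
    · intro x hx
      exact hd x (le_trans (Nat.cast_nonneg m) hx.1.le)
  choose ξ hmem heq using key
  have hξtop : Tendsto ξ atTop atTop :=
    tendsto_atTop_mono (fun m => (hmem m).1.le) tendsto_natCast_atTop_atTop
  have h1 : Tendsto (fun m => f' (ξ m)) atTop (nhds c) := hf'.comp hξtop
  have h2 : Tendsto (fun m : ℕ => f ((m:ℝ)+1) - f m) atTop (nhds (L - L)) := by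
    refine Tendsto.sub ?_ (hf.comp tendsto_natCast_atTop_atTop)
    exact hf.comp (tendsto_atTop_add_const_right _ 1 tendsto_natCast_atTop_atTop)
  have h3 : Tendsto (fun m => f' (ξ m)) atTop (nhds (L - L)) := by
    refine h2.congr fun m => ?_
    rw [heq m]
    simp
  have := tendsto_nhds_unique h1 h3
  simpa using this

/-- Monotonicity of the components of the graph SEIR system and convergence of
every trajectory to an equilibrium of the form (slim, 0, 0, rlim). -/
theorem stmt_2 (n : ℕ) (a : Fin n → Fin n → ℝ) (ha : ∀ j k, 0 ≤ a j k)
    (β μ γ : ℝ) (hβ : 0 < β) (hμ : 0 < μ) (hγ : 0 < γ)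
    (s e i r : ℝ → Fin n → ℝ)
    (hode : ∀ t ≥ (0:ℝ), ∀ j,
      HasDerivAt (fun t => s t j) (-β * s t j * ∑ k, a j k * i t k) t ∧
      HasDerivAt (fun t => e t j) (β * s t j * (∑ k, a j k * i t k) - μ * e t j) t ∧
      HasDerivAt (fun t => i t j) (μ * e t j - γ * i t j) t ∧
      HasDerivAt (fun t => r t j) (γ * i t j) t)
    (hbnd : ∀ t ≥ (0:ℝ), ∀ j,
      s t j ∈ Set.Icc (0:ℝ) 1 ∧ e t j ∈ Set.Icc (0:ℝ) 1 ∧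
      i t j ∈ Set.Icc (0:ℝ) 1 ∧ r t j ∈ Set.Icc (0:ℝ) 1)
    (hsum : ∀ t ≥ (0:ℝ), ∀ j, s t j + e t j + i t j + r t j = 1) :
    (∀ j, MonotoneOn (fun t => r t j) (Set.Ici (0:ℝ))) ∧
    (∀ j, AntitoneOn (fun t => s t j) (Set.Ici (0:ℝ))) ∧
    (∀ j, MonotoneOn (fun t => i t j + r t j) (Set.Ici (0:ℝ))) ∧
    (∀ j, AntitoneOn (fun t => s t j + e t j) (Set.Ici (0:ℝ))) ∧
    (∃ slim rlim : Fin n → ℝ,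
      (∀ j, Filter.Tendsto (fun t => s t j) Filter.atTop (nhds (slim j))) ∧
      (∀ j, Filter.Tendsto (fun t => e t j) Filter.atTop (nhds 0)) ∧
      (∀ j, Filter.Tendsto (fun t => i t j) Filter.atTop (nhds 0)) ∧
      (∀ j, Filter.Tendsto (fun t => r t j) Filter.atTop (nhds (rlim j))) ∧
      (∑ j, slim j) + (∑ j, rlim j) = n) := by
  -- sign facts
  have hsnn : ∀ t ≥ (0:ℝ), ∀ j, 0 ≤ s t j := fun t ht j => (hbnd t ht j).1.1
  have henn : ∀ t ≥ (0:ℝ), ∀ j, 0 ≤ e t j := fun t ht j => (hbnd t ht j).2.1.1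
  have hinn : ∀ t ≥ (0:ℝ), ∀ j, 0 ≤ i t j := fun t ht j => (hbnd t ht j).2.2.1.1
  have hsumnn : ∀ t ≥ (0:ℝ), ∀ j, 0 ≤ ∑ k, a j k * i t k := by
    intro t ht j
    exact Finset.sum_nonneg fun k _ => mul_nonneg (ha j k) (hinn t ht k)
  -- monotonicity
  have hrmono : ∀ j, MonotoneOn (fun t => r t j) (Set.Ici (0:ℝ)) := by
    intro j
    exact myMono _ (fun t => γ * i t j) (fun t ht => (hode t ht j).2.2.2)
      (fun t ht => mul_nonneg hγ.le (hinn t ht j))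
  have hsanti : ∀ j, AntitoneOn (fun t => s t j) (Set.Ici (0:ℝ)) := by
    intro j
    refine myAnti _ (fun t => -β * s t j * ∑ k, a j k * i t k) (fun t ht => (hode t ht j).1)
      (fun t ht => ?_)
    have : 0 ≤ β * s t j * ∑ k, a j k * i t k :=
      mul_nonneg (mul_nonneg hβ.le (hsnn t ht j)) (hsumnn t ht j)
    show -β * s t j * ∑ k, a j k * i t k ≤ 0
    nlinarith
  have hirmono : ∀ j, MonotoneOn (fun t => i t j + r t j) (Set.Ici (0:ℝ)) := by
    intro j
    refine myMono _ (fun t => μ * e t j) (fun t ht => ?_)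
      (fun t ht => mul_nonneg hμ.le (henn t ht j))
    have := ((hode t ht j).2.2.1).add ((hode t ht j).2.2.2)
    exact this.congr_deriv (by ring)
  have hseanti : ∀ j, AntitoneOn (fun t => s t j + e t j) (Set.Ici (0:ℝ)) := by
    intro j
    refine myAnti _ (fun t => -(μ * e t j)) (fun t ht => ?_)
      (fun t ht => neg_nonpos.2 (mul_nonneg hμ.le (henn t ht j)))
    have := ((hode t ht j).1).add ((hode t ht j).2.1)
    exact this.congr_deriv (by ring)
  refine ⟨hrmono, hsanti, hirmono, hseanti, ?_⟩
  -- existence of limits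
  have hrlim : ∀ j, ∃ L, Tendsto (fun t => r t j) atTop (nhds L) := fun j =>
    myTendsto _ (hrmono j) (fun t ht => by linarith [(hbnd t ht j).2.2.2.2])
  have hirlim : ∀ j, ∃ L, Tendsto (fun t => i t j + r t j) atTop (nhds L) := fun j =>
    myTendsto _ (hirmono j)
      (fun t ht => by linarith [(hbnd t ht j).2.2.1.2, (hbnd t ht j).2.2.2.2])
  have hslim : ∀ j, ∃ L, Tendsto (fun t => s t j) atTop (nhds L) := by
    intro j
    have hm : MonotoneOn (fun t => -s t j) (Set.Ici 0) := fun x hx y hy hxy =>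
      neg_le_neg (hsanti j hx hy hxy)
    obtain ⟨L, hL⟩ := myTendsto _ hm (fun t ht => by linarith [hsnn t ht j])
    exact ⟨-L, by simpa using hL.neg⟩
  have hselim : ∀ j, ∃ L, Tendsto (fun t => s t j + e t j) atTop (nhds L) := by
    intro j
    have hm : MonotoneOn (fun t => -(s t j + e t j)) (Set.Ici 0) := fun x hx y hy hxy =>
      neg_le_neg (hseanti j hx hy hxy)
    obtain ⟨L, hL⟩ := myTendsto _ hm
      (fun t ht => by linarith [hsnn t ht j, henn t ht j])
    exact ⟨-L, by simpa using hL.neg⟩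
  choose rlim hrl using hrlim
  choose Lir hirl using hirlim
  choose slim hsl using hslim
  choose Lse hsel using hselim
  -- i and e converge
  have hil : ∀ j, Tendsto (fun t => i t j) atTop (nhds (Lir j - rlim j)) := by
    intro j
    have := (hirl j).sub (hrl j)
    simpa using this
  have hel : ∀ j, Tendsto (fun t => e t j) atTop (nhds (Lse j - slim j)) := by
    intro j
    have := (hsel j).sub (hsl j)
    simpa using this
  -- Barbalat: limit of i is 0
  have hi0 : ∀ j, Lir j - rlim j = 0 := by
    intro j
    have hc : Tendsto (fun t => γ * i t j) atTop (nhds (γ * (Lir j - rlim j))) :=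
      (hil j).const_mul γ
    have := myBarbalat (fun t => r t j) (fun t => γ * i t j)
      (fun t ht => (hode t ht j).2.2.2) (hrl j) hc
    exact (mul_eq_zero.1 this).resolve_left hγ.ne'
  have hil0 : ∀ j, Tendsto (fun t => i t j) atTop (nhds 0) := by
    intro j; have := hil j; rwa [hi0 j] at this
  -- Barbalat: limit of e is 0
  have he0 : ∀ j, Lse j - slim j = 0 := by
    intro j
    have hc : Tendsto (fun t => μ * e t j - γ * i t j) atTop
        (nhds (μ * (Lse j - slim j) - γ * 0)) :=
      ((hel j).const_mul μ).sub ((hil0 j).const_mul γ)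
    have := myBarbalat (fun t => i t j) (fun t => μ * e t j - γ * i t j)
      (fun t ht => (hode t ht j).2.2.1) (hil0 j) hc
    have h2 : μ * (Lse j - slim j) = 0 := by linarith
    exact (mul_eq_zero.1 h2).resolve_left hμ.ne'
  have hel0 : ∀ j, Tendsto (fun t => e t j) atTop (nhds 0) := by
    intro j; have := hel j; rwa [he0 j] at this
  refine ⟨slim, rlim, hsl, hel0, hil0, hrl, ?_⟩
  -- the sum identity
  have hT : Tendsto (fun t => ∑ j, (s t j + e t j + i t j + r t j)) atTop
      (nhds (∑ j, (slim j + 0 + 0 + rlim j))) := by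
    refine tendsto_finset_sum _ fun j _ => ?_
    exact (((hsl j).add (hel0 j)).add (hil0 j)).add (hrl j)
  have hT2 : Tendsto (fun t => ∑ j, (s t j + e t j + i t j + r t j)) atTop
      (nhds (n : ℝ)) := by
    have : (fun t => ∑ j, (s t j + e t j + i t j + r t j)) =ᶠ[atTop] fun _ => (n : ℝ) := by
      filter_upwards [eventually_ge_atTop (0:ℝ)] with t ht
      simp [hsum t ht]
    exact Tendsto.congr' this.symm tendsto_const_nhds
  have := tendsto_nhds_unique hT hT2
  simp only [add_zero] at this
  rw [← this, ← Finset.sum_add_distrib]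
end

section
/- Consider the graph SEIR system and let B(t) = Diag(s(t)) A be irreducible and nonnegative with Perron eigenvalue λ_M(t) and positive left Perron eigenvector V_M(t). If for some τ ≥ 0 one has β λ_M(τ) ≤ γ, then the function q_τ(t) = V_M(τ)ᵀ (e(t) + i(t)) is monotone nonincreasing on [τ, ∞) and converges to 0 as t → ∞. -/
lemma mono_aux (F f : ℝ → ℝ) (a b : ℝ) (hab : a ≤ b)
    (hF : ∀ t ∈ Set.Icc a b, HasDerivAt F (f t) t)
    (hf : ∀ t ∈ Set.Icc a b, 0 ≤ f t) : F a ≤ F b := by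
  have hm : MonotoneOn F (Set.Icc a b) := by
    apply monotoneOn_of_deriv_nonneg (convex_Icc a b)
      (fun t ht => (hF t ht).continuousAt.continuousWithinAt)
    · intro t ht
      rw [interior_Icc] at ht
      exact (hF t (Set.Ioo_subset_Icc_self ht)).differentiableAt.differentiableWithinAt
    · intro t ht
      rw [interior_Icc] at ht
      rw [(hF t (Set.Ioo_subset_Icc_self ht)).deriv]
      exact hf t (Set.Ioo_subset_Icc_self ht)
  exact hm (Set.left_mem_Icc.2 hab) (Set.right_mem_Icc.2 hab) hab

lemma barbalat (F f g : ℝ → ℝ) (K M : ℝ) (hK : 0 < K)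
    (hF : ∀ t ≥ (0:ℝ), HasDerivAt F (f t) t)
    (hf : ∀ t ≥ (0:ℝ), HasDerivAt f (g t) t)
    (hfpos : ∀ t ≥ (0:ℝ), 0 ≤ f t)
    (hFbd : ∀ t ≥ (0:ℝ), F t ≤ M)
    (hg : ∀ t ≥ (0:ℝ), |g t| ≤ K) :
    Filter.Tendsto f Filter.atTop (nhds 0) := by
  -- F converges at top
  set Ft : ℝ → ℝ := fun t => F (max t 0) with hFt
  have hFtmono : Monotone Ft := by
    intro x y hxy
    apply mono_aux F f (max x 0) (max y 0) (max_le_max hxy le_rfl)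
    · exact fun t ht => hF t (le_trans (le_max_right x 0) ht.1)
    · exact fun t ht => hfpos t (le_trans (le_max_right x 0) ht.1)
  have hFtbd : BddAbove (Set.range Ft) := ⟨M, by rintro _ ⟨x, rfl⟩; exact hFbd _ (le_max_right x 0)⟩
  have hFttend : Filter.Tendsto Ft Filter.atTop (nhds (⨆ t, Ft t)) :=
    tendsto_atTop_ciSup hFtmono hFtbd
  set L := ⨆ t, Ft t with hL
  have hFeq : ∀ᶠ t in Filter.atTop, F t = Ft t := by
    filter_upwards [Filter.eventually_ge_atTop (0:ℝ)] with t ht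
    simp [hFt, max_eq_left ht]
  have hFtend : Filter.Tendsto F Filter.atTop (nhds L) :=
    hFttend.congr' (by filter_upwards [hFeq] with t ht using ht.symm)
  rw [Metric.tendsto_atTop]
  intro ε hε
  set δ := ε / (2 * K) with hδdef
  have hδ : 0 < δ := div_pos hε (by linarith)
  obtain ⟨N0, hN0⟩ := (Metric.tendsto_atTop.1 hFtend) (ε * δ / 8) (by positivity)
  refine ⟨max N0 0, fun t ht => ?_⟩
  have ht0 : (0:ℝ) ≤ t := le_trans (le_max_right N0 0) ht
  have htN0 : N0 ≤ t := le_trans (le_max_left N0 0) ht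
  rw [Real.dist_eq, sub_zero, abs_of_nonneg (hfpos t ht0)]
  by_contra hcon
  push_neg at hcon
  -- f ≥ ε/2 on [t, t+δ]
  have hfhalf : ∀ u ∈ Set.Icc t (t + δ), ε / 2 ≤ f u := by
    intro u hu
    have hu0 : (0:ℝ) ≤ u := le_trans ht0 hu.1
    have key : f t + K * t ≤ f u + K * u := by
      apply mono_aux (fun v => f v + K * v) (fun v => g v + K) t u hu.1
      · intro v hv
        exact (hf v (le_trans ht0 hv.1)).add (by simpa using (hasDerivAt_id v).const_mul K)
      · intro v hv
        have := abs_le.1 (hg v (le_trans ht0 hv.1))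
        linarith [this.1]
    have hKu : K * (u - t) ≤ K * δ := by
      apply mul_le_mul_of_nonneg_left _ hK.le
      linarith [hu.2]
    have hKδ : K * δ = ε / 2 := by
      rw [hδdef]; field_simp
    nlinarith
  -- F increases by at least εδ/2 over [t, t+δ]
  have hFinc : F t + ε * δ / 2 ≤ F (t + δ) := by
    have key : F t - (ε / 2) * t ≤ F (t + δ) - (ε / 2) * (t + δ) := by
      apply mono_aux (fun v => F v - (ε / 2) * v) (fun v => f v - ε / 2) t (t + δ) (by linarith)
      · intro v hv
        exact (hF v (le_trans ht0 hv.1)).sub (by simpa using (hasDerivAt_id v).const_mul (ε/2))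
      · intro v hv
        linarith [hfhalf v hv]
    nlinarith
  have h1 := hN0 t htN0
  have h2 := hN0 (t + δ) (by linarith)
  rw [Real.dist_eq] at h1 h2
  have h1' := abs_lt.1 h1
  have h2' := abs_lt.1 h2
  nlinarith



/-- If β λ_M(τ) ≤ γ, then q_τ(t) = V_M(τ)ᵀ (e(t)+i(t)) is nonincreasing on [τ,∞)
and tends to 0. -/
theorem stmt_3 (n : ℕ) (A : Fin n → Fin n → ℝ) (hA : ∀ j k, 0 ≤ A j k)
    (β μ γ : ℝ) (hβ : 0 < β) (hμ : 0 < μ) (hγ : 0 < γ)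
    (s e i r : ℝ → Fin n → ℝ)
    (hode : ∀ t ≥ (0:ℝ), ∀ j,
      HasDerivAt (fun t => s t j) (-β * s t j * ∑ k, A j k * i t k) t ∧
      HasDerivAt (fun t => e t j) (β * s t j * (∑ k, A j k * i t k) - μ * e t j) t ∧
      HasDerivAt (fun t => i t j) (μ * e t j - γ * i t j) t ∧
      HasDerivAt (fun t => r t j) (γ * i t j) t)
    (hbnd : ∀ t ≥ (0:ℝ), ∀ j,
      s t j ∈ Set.Icc (0:ℝ) 1 ∧ e t j ∈ Set.Icc (0:ℝ) 1 ∧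
      i t j ∈ Set.Icc (0:ℝ) 1 ∧ r t j ∈ Set.Icc (0:ℝ) 1)
    (hsum : ∀ t ≥ (0:ℝ), ∀ j, s t j + e t j + i t j + r t j = 1)
    (hsmono : ∀ j, AntitoneOn (fun t => s t j) (Set.Ici (0:ℝ)))
    (τ : ℝ) (hτ : 0 ≤ τ)
    (lamM : ℝ) (V : Fin n → ℝ) (hV : ∀ j, 0 < V j)
    -- V is a positive left eigenvector of B(τ) = Diag(s(τ)) A for the
    -- Perron eigenvalue lamM :
    (heig : ∀ k, ∑ j, V j * (s τ j * A j k) = lamM * V k)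
    (hcond : β * lamM ≤ γ) :
    AntitoneOn (fun t => ∑ j, V j * (e t j + i t j)) (Set.Ici τ) ∧
    Filter.Tendsto (fun t => ∑ j, V j * (e t j + i t j))
      Filter.atTop (nhds 0) := by
  have hipos : ∀ t ≥ (0:ℝ), ∀ k, 0 ≤ i t k := fun t ht k => ((hbnd t ht k).2.2.1).1
  have hAi : ∀ t ≥ (0:ℝ), ∀ j, 0 ≤ ∑ k, A j k * i t k := fun t ht j =>
    Finset.sum_nonneg fun k _ => mul_nonneg (hA j k) (hipos t ht k)
  -- derivative of q
  have hq : ∀ t ≥ (0:ℝ), HasDerivAt (fun t => ∑ j, V j * (e t j + i t j))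
      (∑ j, V j * (β * s t j * (∑ k, A j k * i t k) - γ * i t j)) t := by
    intro t ht
    apply HasDerivAt.fun_sum
    intro j _
    have h1 := (hode t ht j).2.1
    have h2 := (hode t ht j).2.2.1
    have h3 := HasDerivAt.const_mul (V j) (h1.fun_add h2)
    exact h3.congr_deriv (by ring)
  -- the derivative is nonpositive on [τ, ∞)
  have hkey : ∀ t ∈ Set.Ici τ,
      (∑ j, V j * (β * s t j * (∑ k, A j k * i t k) - γ * i t j)) ≤ 0 := by
    intro t ht
    have ht' : τ ≤ t := ht
    have ht0 : (0:ℝ) ≤ t := le_trans hτ ht'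
    have step1 : ∀ j, V j * (β * s t j * (∑ k, A j k * i t k) - γ * i t j)
        ≤ β * (V j * (s τ j * (∑ k, A j k * i t k))) - γ * (V j * i t j) := by
      intro j
      have hs : s t j ≤ s τ j := hsmono j (Set.mem_Ici.2 hτ) (Set.mem_Ici.2 ht0) ht'
      have h1 : β * s t j * (∑ k, A j k * i t k) ≤ β * s τ j * (∑ k, A j k * i t k) :=
        mul_le_mul_of_nonneg_right (mul_le_mul_of_nonneg_left hs hβ.le) (hAi t ht0 j)
      have h2 := mul_le_mul_of_nonneg_left h1 (hV j).le
      nlinarith [h2]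
    calc (∑ j, V j * (β * s t j * (∑ k, A j k * i t k) - γ * i t j))
        ≤ ∑ j, (β * (V j * (s τ j * (∑ k, A j k * i t k))) - γ * (V j * i t j)) :=
          Finset.sum_le_sum fun j _ => step1 j
      _ = β * (∑ j, V j * (s τ j * ∑ k, A j k * i t k)) - γ * ∑ j, V j * i t j := by
          rw [Finset.sum_sub_distrib, Finset.mul_sum, Finset.mul_sum]
      _ = β * (∑ k, (∑ j, V j * (s τ j * A j k)) * i t k) - γ * ∑ j, V j * i t j := by
          congr 1
          congr 1
          have h4 : ∀ j : Fin n, V j * (s τ j * ∑ k, A j k * i t k)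
              = ∑ k, V j * (s τ j * A j k) * i t k := by
            intro j
            rw [Finset.mul_sum, Finset.mul_sum]
            exact Finset.sum_congr rfl fun k _ => by ring
          simp only [h4, Finset.sum_mul]
          exact Finset.sum_comm
      _ = β * lamM * (∑ k, V k * i t k) - γ * ∑ j, V j * i t j := by
          simp only [heig]
          rw [Finset.mul_sum]
          congr 1
          rw [Finset.mul_sum]
          exact Finset.sum_congr rfl fun k _ => by ring
      _ ≤ 0 := by
          have hS : 0 ≤ ∑ k, V k * i t k :=
            Finset.sum_nonneg fun k _ => mul_nonneg (hV k).le (hipos t ht0 k)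
          nlinarith [mul_le_mul_of_nonneg_right hcond hS]
  constructor
  · -- AntitoneOn
    apply antitoneOn_of_deriv_nonpos (convex_Ici τ)
    · intro t ht
      exact (hq t (le_trans hτ ht)).continuousAt.continuousWithinAt
    · intro t ht
      rw [interior_Ici] at ht
      exact (hq t (le_trans hτ ht.le)).differentiableAt.differentiableWithinAt
    · intro t ht
      rw [interior_Ici] at ht
      rw [(hq t (le_trans hτ ht.le)).deriv]
      exact hkey t (Set.mem_Ici.2 (le_of_lt ht))
  · -- Tendsto 0
    have hi0 : ∀ j, Filter.Tendsto (fun t => i t j) Filter.atTop (nhds 0) := by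
      intro j
      have hb : Filter.Tendsto (fun t => γ * i t j) Filter.atTop (nhds 0) := by
        apply barbalat (fun t => r t j) (fun t => γ * i t j)
          (fun t => γ * (μ * e t j - γ * i t j)) (γ * (μ + γ)) 1
          (by positivity)
        · exact fun t ht => (hode t ht j).2.2.2
        · exact fun t ht => HasDerivAt.const_mul γ (hode t ht j).2.2.1
        · exact fun t ht => mul_nonneg hγ.le (hipos t ht j)
        · exact fun t ht => ((hbnd t ht j).2.2.2).2
        · intro t ht
          have he1 := (hbnd t ht j).2.1
          have hi1 := (hbnd t ht j).2.2.1
          rw [abs_mul, abs_of_nonneg hγ.le]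
          apply mul_le_mul_of_nonneg_left _ hγ.le
          rw [abs_le]
          constructor <;> nlinarith [he1.1, he1.2, hi1.1, hi1.2]
      have := hb.const_mul γ⁻¹
      simp only [mul_zero] at this
      refine this.congr fun t => ?_
      field_simp
    have he0 : ∀ j, Filter.Tendsto (fun t => e t j) Filter.atTop (nhds 0) := by
      intro j
      have hb : Filter.Tendsto (fun t => μ * e t j) Filter.atTop (nhds 0) := by
        apply barbalat (fun t => -(s t j + e t j)) (fun t => μ * e t j)
          (fun t => μ * (β * s t j * (∑ k, A j k * i t k) - μ * e t j))
          (μ * (β * (∑ k, A j k) + μ)) 0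
          (by
            have : (0:ℝ) ≤ ∑ k, A j k := Finset.sum_nonneg fun k _ => hA j k
            positivity)
        · intro t ht
          have h1 := (hode t ht j).1
          have h2 := (hode t ht j).2.1
          have h3 := (h1.fun_add h2).fun_neg
          exact h3.congr_deriv (by ring)
        · exact fun t ht => HasDerivAt.const_mul μ (hode t ht j).2.1
        · exact fun t ht => mul_nonneg hμ.le ((hbnd t ht j).2.1).1
        · intro t ht
          have hs1 := (hbnd t ht j).1
          have he1 := (hbnd t ht j).2.1
          nlinarith [hs1.1, he1.1]
        · intro t ht
          have hs1 := (hbnd t ht j).1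
          have he1 := (hbnd t ht j).2.1
          have hSle : ∑ k, A j k * i t k ≤ ∑ k, A j k := by
            apply Finset.sum_le_sum
            intro k _
            nlinarith [hA j k, ((hbnd t ht k).2.2.1).2, ((hbnd t ht k).2.2.1).1]
          have hS0 : 0 ≤ ∑ k, A j k * i t k := hAi t ht j
          have h1 : β * s t j * (∑ k, A j k * i t k) ≤ β * ∑ k, A j k := by
            calc β * s t j * (∑ k, A j k * i t k)
                ≤ β * 1 * (∑ k, A j k * i t k) :=
                  mul_le_mul_of_nonneg_right
                    (mul_le_mul_of_nonneg_left hs1.2 hβ.le) hS0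
              _ = β * (∑ k, A j k * i t k) := by ring
              _ ≤ β * ∑ k, A j k := mul_le_mul_of_nonneg_left hSle hβ.le
          have h2 : 0 ≤ β * s t j * (∑ k, A j k * i t k) :=
            mul_nonneg (mul_nonneg hβ.le hs1.1) hS0
          have h3 : μ * e t j ≤ μ := by nlinarith [he1.2]
          have h4 : 0 ≤ μ * e t j := mul_nonneg hμ.le he1.1
          have h5 : 0 ≤ β * ∑ k, A j k :=
            mul_nonneg hβ.le (Finset.sum_nonneg fun k _ => hA j k)
          rw [abs_mul, abs_of_nonneg hμ.le]
          apply mul_le_mul_of_nonneg_left _ hμ.le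
          rw [abs_le]
          constructor <;> linarith
      have := hb.const_mul μ⁻¹
      simp only [mul_zero] at this
      refine this.congr fun t => ?_
      field_simp
    have h : Filter.Tendsto (fun t => ∑ j : Fin n, V j * (e t j + i t j))
        Filter.atTop (nhds (∑ j : Fin n, V j * ((0:ℝ) + 0))) := by
      apply tendsto_finset_sum
      intro j _
      exact ((he0 j).add (hi0 j)).const_mul (V j)
    simpa using h
end
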